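/- Let G be a block graph, B a block of G, and u_1, u_2 ∈ V(B) two distinct free vertices of G. Let H = G \ V(B). Then for each 1 ≤ k ≤ ν(G), aim(H,k) ≤ aim(G,k) − 1. -/
import Mathlib


open scoped Classical

variable {V : Type*} [DecidableEq V]

/-- A matching of a hypergraph with edge set `E`: a set of pairwise disjoint edges. -/
def IsMatching (E M : Finset (Finset V)) : Prop :=
  M ⊆ E ∧ ∀ e ∈ M, ∀ f ∈ M, e ≠ f → Disjoint e f

/-- The set of vertices covered by a set of edges. -/
def verts (M : Finset (Finset V)) : Finset V := M.sup id

/-- Edge set of the induced sub-hypergraph on the vertex set `W`. -/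
def inducedSub (E : Finset (Finset V)) (W : Finset V) : Finset (Finset V) :=
  E.filter (fun e => e ⊆ W)

/-- The matching number. -/
noncomputable def matchNum (E : Finset (Finset V)) : ℕ :=
  sSup {n : ℕ | ∃ M : Finset (Finset V), IsMatching E M ∧ M.card = n}

/-- `P` is a partition of the finite set `M` into nonempty pairwise disjoint parts. -/
def IsPartitionOf (M : Finset (Finset V)) (P : Finset (Finset (Finset V))) : Prop :=
  (∀ p ∈ P, p ≠ ∅) ∧ (∀ p ∈ P, ∀ q ∈ P, p ≠ q → Disjoint p q) ∧ P.sup id = M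

/-- A partition witnessing that `M` is a generalized `k`-admissible matching. -/
def GenAdmPartition (E M : Finset (Finset V)) (k : ℕ)
    (P : Finset (Finset (Finset V))) : Prop :=
  IsPartitionOf M P ∧
  (∀ e ∈ inducedSub E (verts M), ∃ p ∈ P, e ⊆ verts p) ∧
  k ≤ M.card ∧ M.card ≤ P.card + k - 1 ∧
  ∀ p ∈ P, ∀ M' : Finset (Finset V),
    IsMatching (inducedSub E (verts p)) M' → M'.card = p.card → verts M' = verts p

/-- Generalized `k`-admissible matching. -/
def IsGenAdmissible (E M : Finset (Finset V)) (k : ℕ) : Prop :=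
  IsMatching E M ∧ ∃ P, GenAdmPartition E M k P

/-- A partition witnessing that `M` is a `k`-admissible matching (d-uniform setting). -/
def AdmPartition (E M : Finset (Finset V)) (k : ℕ)
    (P : Finset (Finset (Finset V))) : Prop :=
  IsPartitionOf M P ∧
  (∀ e ∈ inducedSub E (verts M), ∃ p ∈ P, e ⊆ verts p) ∧
  M.card ≤ P.card + k - 1

/-- `k`-admissible matching. -/
def IsAdmissible (E M : Finset (Finset V)) (k : ℕ) : Prop :=
  IsMatching E M ∧ ∃ P, AdmPartition E M k P

/-- The `k`-admissible matching number `aim(H, k)`. -/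
noncomputable def aim (E : Finset (Finset V)) (k : ℕ) : ℕ :=
  sSup {n : ℕ | ∃ M : Finset (Finset V), IsAdmissible E M k ∧ M.card = n}

/-- The edges of a simple graph, as a set of `2`-element vertex subsets. -/
noncomputable def graphEdges [Fintype V] (G : SimpleGraph V) : Finset (Finset V) :=
  Finset.univ.filter (fun s : Finset V =>
    s.card = 2 ∧ ∀ a ∈ s, ∀ b ∈ s, a ≠ b → G.Adj a b)

/-- The `k`-admissible matching number of a graph. -/
noncomputable def aimG [Fintype V] (G : SimpleGraph V) (k : ℕ) : ℕ :=
  aim (graphEdges G) k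

/-- The Erey–Hibi `k`-admissible matchings: additionally each part must induce a forest. -/
def IsAdmissibleStar [Fintype V] (G : SimpleGraph V) (M : Finset (Finset V)) (k : ℕ) : Prop :=
  IsMatching (graphEdges G) M ∧ ∃ P : Finset (Finset (Finset V)),
    AdmPartition (graphEdges G) M k P ∧
    ∀ p ∈ P, (SimpleGraph.induce (↑(verts p) : Set V) G).IsAcyclic

/-- The Erey–Hibi `k`-admissible matching number `aim*(G,k)`. -/
noncomputable def aimStar [Fintype V] (G : SimpleGraph V) (k : ℕ) : ℕ :=
  sSup {n : ℕ | ∃ M : Finset (Finset V), IsAdmissibleStar G M k ∧ M.card = n}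

/-- `G` has an induced cycle on `n` vertices. -/
def HasInducedCycle {W : Type*} (G : SimpleGraph W) (n : ℕ) : Prop :=
  ∃ f : Fin n → W, Function.Injective f ∧
    ∀ i j : Fin n, G.Adj (f i) (f j) ↔ ((j : ℕ) = ((i : ℕ) + 1) % n ∨ (i : ℕ) = ((j : ℕ) + 1) % n)

/-- A graph is chordal if it has no induced cycle of length at least `4`. -/
def Chordal {W : Type*} (G : SimpleGraph W) : Prop :=
  ∀ n : ℕ, 4 ≤ n → ¬ HasInducedCycle G n

/-- A block of `G`: a maximal clique. -/
def IsBlock (G : SimpleGraph V) (B : Finset V) : Prop :=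
  G.IsClique (↑B : Set V) ∧ ∀ C : Finset V, G.IsClique (↑C : Set V) → B ⊆ C → B = C

/-- A block graph: a chordal graph in which any two distinct maximal cliques intersect
in at most one vertex. -/
def IsBlockGraph (G : SimpleGraph V) : Prop :=
  Chordal G ∧ ∀ B C : Finset V, IsBlock G B → IsBlock G C → B ≠ C → (B ∩ C).card ≤ 1

/-- A free vertex: its open neighborhood induces a complete graph. -/
def FreeVertex (G : SimpleGraph V) (x : V) : Prop :=
  G.IsClique (G.neighborSet x)

/-! ### Auxiliary lemmas -/

lemma mem_verts_iff {M : Finset (Finset V)} {a : V} : a ∈ verts M ↔ ∃ e ∈ M, a ∈ e := by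
  simp [verts, Finset.mem_sup]

/-- A neighbor of a free vertex of a block `B` lies in `B`. -/
lemma free_adj_mem_block {G : SimpleGraph V} {B : Finset V} (hB : IsBlock G B)
    {u : V} (hu : u ∈ B) (hf : FreeVertex G u) {a : V} (ha : G.Adj u a) : a ∈ B := by
  by_contra hnot
  have key : ∀ z ∈ B, z ≠ a → G.Adj a z := by
    intro z hz hza
    by_cases hzu : z = u
    · subst hzu; exact ha.symm
    · have hzN : z ∈ G.neighborSet u := hB.1 (Finset.mem_coe.mpr hu) (Finset.mem_coe.mpr hz)
        (fun h => hzu h.symm)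
    -- `hzN : G.Adj u z`
      exact hf (SimpleGraph.mem_neighborSet .. |>.mpr ha) hzN (Ne.symm hza)
  have hC : G.IsClique (↑(insert a B) : Set V) := by
    intro x hx y hy hxy
    simp only [Finset.coe_insert, Set.mem_insert_iff, Finset.mem_coe] at hx hy
    rcases hx with rfl | hx
    · rcases hy with rfl | hy
      · exact absurd rfl hxy
      · exact key y hy (fun h => hxy h.symm)
    · rcases hy with rfl | hy
      · exact (key x hx hxy).symm
      · exact hB.1 (Finset.mem_coe.mpr hx) (Finset.mem_coe.mpr hy) hxy
  have := hB.2 (insert a B) hC (Finset.subset_insert a B)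
  exact hnot (this ▸ Finset.mem_insert_self a B)

/-- The empty matching is `k`-admissible in any graph. -/
lemma empty_isAdmissible {W : Type*} [DecidableEq W] [Fintype W] (Gr : SimpleGraph W) (k : ℕ) :
    IsAdmissible (graphEdges Gr) (∅ : Finset (Finset W)) k := by
  refine ⟨⟨Finset.empty_subset _, by simp⟩, ∅, ⟨⟨by simp, by simp, by simp⟩, ?_, by simp⟩⟩
  intro e he
  simp only [inducedSub, Finset.mem_filter, graphEdges, Finset.mem_univ, true_and] at he
  obtain ⟨⟨hcard, -⟩, hsub⟩ := he
  have : e = ∅ := Finset.subset_empty.mp (by simpa [verts] using hsub)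
  simp [this] at hcard

lemma bddAbove_admissible_set {W : Type*} [DecidableEq W] (E : Finset (Finset W)) (k : ℕ) :
    BddAbove {n : ℕ | ∃ M : Finset (Finset W), IsAdmissible E M k ∧ M.card = n} := by
  refine ⟨E.card, ?_⟩
  rintro n ⟨M, ⟨⟨hME, -⟩, -⟩, rfl⟩
  exact Finset.card_le_card hME

/-- For a block graph `G`, a block `B` containing two distinct free vertices, and the
induced subgraph `H = G \ V(B)`, one has `aim(H,k) + 1 ≤ aim(G,k)` for `1 ≤ k ≤ ν(G)`. -/
theorem aim_deleteBlock [Fintype V] (G : SimpleGraph V) (hG : IsBlockGraph G)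
    (B : Finset V) (hB : IsBlock G B) (u₁ u₂ : V) (hu₁ : u₁ ∈ B) (hu₂ : u₂ ∈ B)
    (hne : u₁ ≠ u₂) (hf₁ : FreeVertex G u₁) (hf₂ : FreeVertex G u₂)
    (k : ℕ) (hk1 : 1 ≤ k) (hk2 : k ≤ matchNum (graphEdges G)) :
    aimG (SimpleGraph.induce ((↑B : Set V)ᶜ) G) k + 1 ≤ aimG G k := by
  classical
  set S : Set V := ((↑B : Set V)ᶜ) with hSdef
  set H : SimpleGraph S := SimpleGraph.induce S G with hHdef
  -- the supremum defining `aimG H k` is attained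
  have hTne : {n : ℕ | ∃ M : Finset (Finset ↥S), IsAdmissible (graphEdges H) M k ∧ M.card = n}.Nonempty :=
    ⟨0, ∅, empty_isAdmissible H k, rfl⟩
  have hTmem := Nat.sSup_mem hTne (bddAbove_admissible_set (graphEdges H) k)
  obtain ⟨M, ⟨⟨hME, hMdisj⟩, P, ⟨hPne, hPdisj, hPsup⟩, hPcover, hPcard⟩, hMcard⟩ := hTmem
  -- lifting edges from `H` to `G`
  set lift : Finset ↥S → Finset V := fun e => e.image Subtype.val with hliftdef
  have liftInj : Function.Injective lift := Finset.image_injective Subtype.val_injective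
  have lift_notB : ∀ (e : Finset ↥S), ∀ a ∈ lift e, a ∉ B := by
    rintro e a ha
    simp only [hliftdef, Finset.mem_image] at ha
    obtain ⟨x, -, rfl⟩ := ha
    exact fun hc => x.2 (Finset.mem_coe.mpr hc)
  have adj_H : ∀ x y : ↥S, H.Adj x y ↔ G.Adj ↑x ↑y := by
    intro x y
    simp [hHdef, SimpleGraph.induce, SimpleGraph.comap_adj]
  have lift_edge : ∀ e ∈ graphEdges H, lift e ∈ graphEdges G := by
    intro e he
    simp only [graphEdges, Finset.mem_filter, Finset.mem_univ, true_and] at he ⊢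
    obtain ⟨hcard, hadj⟩ := he
    refine ⟨by rw [hliftdef]; simpa [Finset.card_image_of_injective _ Subtype.val_injective], ?_⟩
    rintro a ha b hb hab
    simp only [hliftdef, Finset.mem_image] at ha hb
    obtain ⟨x, hx, rfl⟩ := ha
    obtain ⟨y, hy, rfl⟩ := hb
    exact (adj_H x y).mp (hadj x hx y hy (fun h => hab (by rw [h])))
  -- the new edge
  set e₀ : Finset V := {u₁, u₂} with he₀def
  have he₀card : e₀.card = 2 := Finset.card_pair hne
  have hadj12 : G.Adj u₁ u₂ := hB.1 (Finset.mem_coe.mpr hu₁) (Finset.mem_coe.mpr hu₂) hne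
  have he₀G : e₀ ∈ graphEdges G := by
    simp only [graphEdges, Finset.mem_filter, Finset.mem_univ, true_and]
    refine ⟨he₀card, ?_⟩
    intro a ha b hb hab
    simp only [he₀def, Finset.mem_insert, Finset.mem_singleton] at ha hb
    rcases ha with rfl | rfl <;> rcases hb with rfl | rfl <;>
      first | exact absurd rfl hab | exact hadj12 | exact hadj12.symm
  have he₀B : ∀ a ∈ e₀, a ∈ B := by
    intro a ha
    simp only [he₀def, Finset.mem_insert, Finset.mem_singleton] at ha
    rcases ha with rfl | rfl <;> assumption
  have he₀_ne_lift : ∀ e : Finset ↥S, e₀ ≠ lift e := by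
    intro e h
    exact lift_notB e u₁ (h ▸ Finset.mem_insert_self u₁ {u₂}) hu₁
  -- the lifted matching and partition
  set M' : Finset (Finset V) := insert e₀ (M.image lift) with hM'def
  set P' : Finset (Finset (Finset V)) :=
    insert {e₀} (P.image (fun p => p.image lift)) with hP'def
  have he₀_notMem : e₀ ∉ M.image lift := by
    intro h
    obtain ⟨e, -, he⟩ := Finset.mem_image.mp h
    exact he₀_ne_lift e he.symm
  have hsing_notMem : ({e₀} : Finset (Finset V)) ∉ P.image (fun p => p.image lift) := by
    intro h
    obtain ⟨p, hp, hpe⟩ := Finset.mem_image.mp h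
    obtain ⟨e, he⟩ := Finset.nonempty_iff_ne_empty.mpr (hPne p hp)
    have : lift e ∈ ({e₀} : Finset (Finset V)) := hpe ▸ Finset.mem_image_of_mem lift he
    exact he₀_ne_lift e (Finset.mem_singleton.mp this).symm
  -- vertices of the lifted matching
  have hvertsM' : ∀ a : V, a ∈ verts (M.image lift) ↔ ∃ x : ↥S, x ∈ verts M ∧ ↑x = a := by
    intro a
    rw [mem_verts_iff]
    constructor
    · rintro ⟨e, he, hae⟩
      obtain ⟨f, hf, rfl⟩ := Finset.mem_image.mp he
      obtain ⟨x, hx, rfl⟩ := Finset.mem_image.mp hae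
      exact ⟨x, mem_verts_iff.mpr ⟨f, hf, hx⟩, rfl⟩
    · rintro ⟨x, hx, rfl⟩
      obtain ⟨e, he, hxe⟩ := mem_verts_iff.mp hx
      exact ⟨lift e, Finset.mem_image_of_mem lift he, Finset.mem_image_of_mem _ hxe⟩
  have hvertsM'notB : ∀ a ∈ verts (M.image lift), a ∉ B := by
    intro a ha
    obtain ⟨e, he, hae⟩ := mem_verts_iff.mp ha
    obtain ⟨f, -, rfl⟩ := Finset.mem_image.mp he
    exact lift_notB f a hae
  -- M' is a matching of G
  have hM'match : IsMatching (graphEdges G) M' := by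
    constructor
    · intro e he
      rcases Finset.mem_insert.mp he with rfl | he
      · exact he₀G
      · obtain ⟨f, hf, rfl⟩ := Finset.mem_image.mp he
        exact lift_edge f (hME hf)
    · intro e he f hf hef
      have key : ∀ g ∈ M.image lift, Disjoint e₀ g := by
        intro g hg
        rw [Finset.disjoint_left]
        intro a hae₀ hag
        obtain ⟨g', -, rfl⟩ := Finset.mem_image.mp hg
        exact lift_notB g' a hag (he₀B a hae₀)
      rcases Finset.mem_insert.mp he with rfl | he
      · rcases Finset.mem_insert.mp hf with rfl | hf
        · exact absurd rfl hef
        · exact key f hf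
      · rcases Finset.mem_insert.mp hf with rfl | hf
        · exact (key e he).symm
        · obtain ⟨e', he', rfl⟩ := Finset.mem_image.mp he
          obtain ⟨f', hf', rfl⟩ := Finset.mem_image.mp hf
          exact (Finset.disjoint_image Subtype.val_injective).mpr
            (hMdisj e' he' f' hf' (fun h => hef (by rw [h])))
  -- P' is a partition of M'
  have hP'part : IsPartitionOf M' P' := by
    refine ⟨?_, ?_, ?_⟩
    · intro p hp
      rcases Finset.mem_insert.mp hp with rfl | hp
      · simp
      · obtain ⟨q, hq, rfl⟩ := Finset.mem_image.mp hp
        simpa [Finset.image_eq_empty] using hPne q hq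
    · intro p hp q hq hpq
      have key : ∀ r ∈ P.image (fun p => p.image lift),
          Disjoint ({e₀} : Finset (Finset V)) r := by
        intro r hr
        rw [Finset.disjoint_left]
        intro a ha har
        obtain ⟨r', -, rfl⟩ := Finset.mem_image.mp hr
        obtain ⟨e, -, rfl⟩ := Finset.mem_image.mp har
        exact he₀_ne_lift e (Finset.mem_singleton.mp ha).symm
      rcases Finset.mem_insert.mp hp with rfl | hp
      · rcases Finset.mem_insert.mp hq with rfl | hq
        · exact absurd rfl hpq
        · exact key q hq
      · rcases Finset.mem_insert.mp hq with rfl | hq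
        · exact (key p hp).symm
        · obtain ⟨p', hp', rfl⟩ := Finset.mem_image.mp hp
          obtain ⟨q', hq', rfl⟩ := Finset.mem_image.mp hq
          exact (Finset.disjoint_image liftInj).mpr
            (hPdisj p' hp' q' hq' (fun h => hpq (by rw [h])))
    · ext e
      constructor
      · intro he
        obtain ⟨p, hp, hep⟩ := Finset.mem_sup.mp he
        rcases Finset.mem_insert.mp hp with rfl | hp
        · exact Finset.mem_insert.mpr (Or.inl (Finset.mem_singleton.mp hep))
        · obtain ⟨q, hq, rfl⟩ := Finset.mem_image.mp hp
          obtain ⟨f, hf, rfl⟩ := Finset.mem_image.mp hep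
          have hfM : f ∈ P.sup id := Finset.mem_sup.mpr ⟨q, hq, hf⟩
          rw [hPsup] at hfM
          exact Finset.mem_insert.mpr (Or.inr (Finset.mem_image_of_mem lift hfM))
      · intro he
        rcases Finset.mem_insert.mp he with h | he
        · exact Finset.mem_sup.mpr ⟨{e₀}, Finset.mem_insert_self _ _, by simp [h]⟩
        · obtain ⟨f, hf, rfl⟩ := Finset.mem_image.mp he
          have hf' : f ∈ P.sup id := by rw [hPsup]; exact hf
          obtain ⟨q, hq, hfq⟩ := Finset.mem_sup.mp hf'
          exact Finset.mem_sup.mpr ⟨q.image lift,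
            Finset.mem_insert_of_mem (Finset.mem_image_of_mem _ hq),
            Finset.mem_image_of_mem lift hfq⟩
  -- the covering condition
  have hcov : ∀ e ∈ inducedSub (graphEdges G) (verts M'), ∃ p ∈ P', e ⊆ verts p := by
    intro f hf
    simp only [inducedSub, Finset.mem_filter] at hf
    obtain ⟨hfE, hfsub⟩ := hf
    have hfE' := hfE
    simp only [graphEdges, Finset.mem_filter, Finset.mem_univ, true_and] at hfE'
    obtain ⟨hfcard, hfadj⟩ := hfE'
    have hvM' : ∀ a ∈ f, a ∈ e₀ ∨ a ∈ verts (M.image lift) := by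
      intro a ha
      have := hfsub ha
      rw [hM'def] at this
      rw [mem_verts_iff] at this
      obtain ⟨e, he, hae⟩ := this
      rcases Finset.mem_insert.mp he with rfl | he
      · exact Or.inl hae
      · exact Or.inr (mem_verts_iff.mpr ⟨e, he, hae⟩)
    have hsplit : (∀ a ∈ f, a ∈ e₀) ∨ (∀ a ∈ f, a ∈ verts (M.image lift)) := by
      by_contra hcon
      push_neg at hcon
      obtain ⟨⟨a, haf, hae₀⟩, b, hbf, hbv⟩ := hcon
      have haM : a ∈ verts (M.image lift) := (hvM' a haf).resolve_left hae₀
      have hbe₀ : b ∈ e₀ := (hvM' b hbf).resolve_right hbv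
      have hab : a ≠ b := fun h => hae₀ (h ▸ hbe₀)
      have hadj : G.Adj b a := hfadj b hbf a haf (fun h => hab h.symm)
      have haB : a ∉ B := hvertsM'notB a haM
      simp only [he₀def, Finset.mem_insert, Finset.mem_singleton] at hbe₀
      rcases hbe₀ with rfl | rfl
      · exact haB (free_adj_mem_block hB hu₁ hf₁ hadj)
      · exact haB (free_adj_mem_block hB hu₂ hf₂ hadj)
    rcases hsplit with hfe₀ | hfM
    · refine ⟨{e₀}, Finset.mem_insert_self _ _, ?_⟩
      have : f ⊆ e₀ := fun a ha => hfe₀ a ha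
      have hfeq : f = e₀ := Finset.eq_of_subset_of_card_le this (by rw [he₀card, hfcard])
      intro a ha
      rw [mem_verts_iff]
      exact ⟨e₀, Finset.mem_singleton_self e₀, hfeq ▸ ha⟩
    · -- pull back `f` to an edge of `H`
      obtain ⟨a, b, hab, hfab⟩ := Finset.card_eq_two.mp hfcard
      have haf : a ∈ f := hfab ▸ Finset.mem_insert_self a {b}
      have hbf : b ∈ f := hfab ▸ Finset.mem_insert_of_mem (Finset.mem_singleton_self b)
      obtain ⟨x, hxM, hxa⟩ := (hvertsM' a).mp (hfM a haf)
      obtain ⟨y, hyM, hyb⟩ := (hvertsM' b).mp (hfM b hbf)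
      have hxy : x ≠ y := fun h => hab (hxa ▸ hyb ▸ h ▸ rfl)
      have hHxy : H.Adj x y := (adj_H x y).mpr (hxa ▸ hyb ▸ hfadj a haf b hbf hab)
      have hfH : ({x, y} : Finset ↥S) ∈ graphEdges H := by
        simp only [graphEdges, Finset.mem_filter, Finset.mem_univ, true_and]
        refine ⟨Finset.card_pair hxy, ?_⟩
        intro c hc d hd hcd
        simp only [Finset.mem_insert, Finset.mem_singleton] at hc hd
        rcases hc with rfl | rfl <;> rcases hd with rfl | rfl <;>
          first | exact absurd rfl hcd | exact hHxy | exact hHxy.symm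
      have hfHsub : ({x, y} : Finset ↥S) ⊆ verts M := by
        intro c hc
        simp only [Finset.mem_insert, Finset.mem_singleton] at hc
        rcases hc with rfl | rfl <;> assumption
      obtain ⟨p, hp, hppart⟩ := hPcover {x, y} (by
        simp only [inducedSub, Finset.mem_filter]; exact ⟨hfH, hfHsub⟩)
      refine ⟨p.image lift, Finset.mem_insert_of_mem (Finset.mem_image_of_mem _ hp), ?_⟩
      intro c hc
      rw [hfab] at hc
      simp only [Finset.mem_insert, Finset.mem_singleton] at hc
      have key : ∀ z : ↥S, z ∈ verts p → (↑z : V) ∈ verts (p.image lift) := by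
        intro z hz
        obtain ⟨e, he, hze⟩ := mem_verts_iff.mp hz
        exact mem_verts_iff.mpr ⟨lift e, Finset.mem_image_of_mem lift he,
          Finset.mem_image_of_mem _ hze⟩
      rcases hc with rfl | rfl
      · exact hxa ▸ key x (hppart (Finset.mem_insert_self x {y}))
      · exact hyb ▸ key y (hppart (Finset.mem_insert_of_mem (Finset.mem_singleton_self y)))
  -- cardinalities
  have hM'card : M'.card = M.card + 1 := by
    rw [hM'def, Finset.card_insert_of_notMem he₀_notMem,
      Finset.card_image_of_injective _ liftInj]
  have hP'card : P'.card = P.card + 1 := by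
    rw [hP'def, Finset.card_insert_of_notMem hsing_notMem,
      Finset.card_image_of_injective _ (Finset.image_injective liftInj)]
  -- conclude
  have hadm : IsAdmissible (graphEdges G) M' k := by
    refine ⟨hM'match, P', hP'part, hcov, ?_⟩
    rw [hM'card, hP'card]
    omega
  have hmem : M.card + 1 ∈ {n : ℕ | ∃ N : Finset (Finset V),
      IsAdmissible (graphEdges G) N k ∧ N.card = n} := ⟨M', hadm, hM'card⟩
  have := le_csSup (bddAbove_admissible_set (graphEdges G) k) hmem
  have hfin : aimG (SimpleGraph.induce ((↑B : Set V)ᶜ) G) k = M.card := hMcard.symm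
  rw [hfin]
  exact this
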